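/- Let n_1 ≥ n_2 ≥ ... ≥ n_k ≥ 2 with n_1 ≥ 3, n = n_1 + ... + n_k, and let Π = Π_{n_1} □ ... □ Π_{n_k}. Then Π is (n−k−3)-heavy, and consequently every maximal matching of Π has at least (n−k)/(3n−3k+1)·|V(Π)| edges. -/

import Mathlib

/-- A matching of `G`: a set of edges of `G` that are pairwise vertex-disjoint. -/
def IsMatching {V : Type*} (G : SimpleGraph V) (M : Set (Sym2 V)) : Prop :=
  M ⊆ G.edgeSet ∧ ∀ e ∈ M, ∀ f ∈ M, e ≠ f → ∀ v, v ∈ e → v ∉ f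

/-- A maximal matching: a matching not properly contained in another matching. -/
def IsMaximalMatching {V : Type*} (G : SimpleGraph V) (M : Set (Sym2 V)) : Prop :=
  IsMatching G M ∧ ∀ M', IsMatching G M' → M ⊆ M' → M' = M

/-- A vertex is covered by a matching if it is incident to a matching edge. -/
def Covered {V : Type*} (M : Set (Sym2 V)) (v : V) : Prop :=
  ∃ e ∈ M, v ∈ e

/-- An induced 4-cycle of `G`, recorded as its set of four edges. -/
def IsInduced4Cycle {V : Type*} (G : SimpleGraph V) (C : Set (Sym2 V)) : Prop :=
  ∃ a b c d : V, a ≠ c ∧ b ≠ d ∧ G.Adj a b ∧ G.Adj b c ∧ G.Adj c d ∧ G.Adj d a ∧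
    ¬ G.Adj a c ∧ ¬ G.Adj b d ∧ C = {s(a,b), s(b,c), s(c,d), s(d,a)}

/-- `G` is `α`-heavy: every edge `e` lies in at least `α` induced 4-cycles such that
`e` is the only common edge of any two of these cycles. -/
def IsHeavy {V : Type*} (G : SimpleGraph V) (α : ℕ) : Prop :=
  ∀ e ∈ G.edgeSet, ∃ 𝒞 : Set (Set (Sym2 V)),
    α ≤ 𝒞.ncard ∧ (∀ C ∈ 𝒞, IsInduced4Cycle G C ∧ e ∈ C) ∧
    ∀ C ∈ 𝒞, ∀ C' ∈ 𝒞, C ≠ C' → C ∩ C' = {e}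

/-- The hypercube graph `Q_n` on binary strings of length `n`:
two strings are adjacent iff they differ in exactly one position. -/
def hypercube (n : ℕ) : SimpleGraph (Fin n → Bool) :=
  SimpleGraph.fromRel (fun x y => ∃! i, x i ≠ y i)

/-- The permutahedron graph `Π_n` on permutations of `[n]`:
`σ, τ` are adjacent iff `τ = σ * τᵢ` for an adjacent transposition `τᵢ = (i, i+1)`. -/
def permutahedron (n : ℕ) : SimpleGraph (Equiv.Perm (Fin n)) :=
  SimpleGraph.fromRel
    (fun σ τ => ∃ i j : Fin n, (i : ℕ) + 1 = (j : ℕ) ∧ τ = σ * Equiv.swap i j)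

/-- The neighborhood of the set `X` inside the set `S`. -/
def nbhdIn {V : Type*} (G : SimpleGraph V) (X S : Set V) : Set V :=
  {y ∈ S | ∃ x ∈ X, G.Adj x y}

/-- The Cartesian product `Π_{m 0} □ ⋯ □ Π_{m (k-1)}` of permutahedra, as a graph on
tuples of permutations: two tuples are adjacent iff they differ in exactly one coordinate,
where they are adjacent in the corresponding permutahedron. -/
def prodPerm (k : ℕ) (m : Fin k → ℕ) :
    SimpleGraph (∀ i : Fin k, Equiv.Perm (Fin (m i))) where
  Adj x y := ∃ i, (permutahedron (m i)).Adj (x i) (y i) ∧ ∀ j, j ≠ i → x j = y j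
  symm := by
    constructor
    rintro x y ⟨i, h, hj⟩
    exact ⟨i, h.symm, fun j hji => (hj j hji).symm⟩
  loopless := by
    constructor
    rintro x ⟨i, h, -⟩
    exact (permutahedron (m i)).irrefl h

open Equiv

/-- adjacent transposition -/
def sw (M p : ℕ) (hp : p + 1 < M) : Equiv.Perm (Fin M) :=
  Equiv.swap ⟨p, Nat.lt_of_succ_lt hp⟩ ⟨p+1, hp⟩

lemma sw_ne_one {M p : ℕ} (hp : p + 1 < M) : sw M p hp ≠ 1 := by
  intro h
  have := Equiv.ext_iff.mp h ⟨p, Nat.lt_of_succ_lt hp⟩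
  simp [sw, Equiv.swap_apply_def, Fin.ext_iff] at this

lemma sw_injective {M p q : ℕ} (hp : p + 1 < M) (hq : q + 1 < M) (h : sw M p hp = sw M q hq) :
    p = q := by
  by_contra hne
  have h1 := Equiv.ext_iff.mp h ⟨p, Nat.lt_of_succ_lt hp⟩
  simp only [sw, Equiv.swap_apply_def, Fin.ext_iff] at h1
  split_ifs at h1 <;> simp only [Fin.mk.injEq] at * <;> first | omega | exact (by assumption : ¬True) trivial

lemma sw_comm {M p q : ℕ} (hp : p + 1 < M) (hq : q + 1 < M) (h : p + 2 ≤ q ∨ q + 2 ≤ p) :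
    sw M p hp * sw M q hq = sw M q hq * sw M p hp := by
  ext x
  simp only [sw, Equiv.Perm.mul_apply, Equiv.swap_apply_def]
  split_ifs <;> simp only [Fin.ext_iff, Fin.mk.injEq] at * <;> first | omega | exact (by assumption : ¬True) trivial

lemma sw_mul_ne_sw {M p q r : ℕ} (hp : p + 1 < M) (hq : q + 1 < M) (hr : r + 1 < M)
    (h : p + 2 ≤ q ∨ q + 2 ≤ p) : sw M p hp * sw M q hq ≠ sw M r hr := by
  intro he
  have h1 := Equiv.ext_iff.mp he ⟨p, Nat.lt_of_succ_lt hp⟩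
  have h2 := Equiv.ext_iff.mp he ⟨q, Nat.lt_of_succ_lt hq⟩
  simp only [sw, Equiv.Perm.mul_apply, Equiv.swap_apply_def] at h1 h2
  split_ifs at h1 h2 <;> simp only [Fin.ext_iff, Fin.mk.injEq] at * <;> first | omega | exact (by assumption : ¬True) trivial

lemma sw_mul_ne_one {M p q : ℕ} (hp : p + 1 < M) (hq : q + 1 < M)
    (h : p + 2 ≤ q ∨ q + 2 ≤ p) : sw M p hp * sw M q hq ≠ 1 := by
  intro he
  have h1 := Equiv.ext_iff.mp he ⟨p, Nat.lt_of_succ_lt hp⟩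
  simp only [sw, Equiv.Perm.mul_apply, Equiv.swap_apply_def, Equiv.Perm.one_apply] at h1
  split_ifs at h1 <;> simp only [Fin.ext_iff, Fin.mk.injEq] at * <;> first | omega | exact (by assumption : ¬True) trivial

/-- adjacency in the permutahedron, normal form -/
lemma perm_adj {M : ℕ} {σ τ : Equiv.Perm (Fin M)} :
    (permutahedron M).Adj σ τ ↔ ∃ p, ∃ hp : p + 1 < M, τ = σ * sw M p hp := by
  constructor
  · rintro ⟨hne, h | h⟩ <;> obtain ⟨i, j, hij, hT⟩ := h <;>
      refine ⟨(i:ℕ), by omega, ?_⟩ <;>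
      have hsw : Equiv.swap i j = sw M (i:ℕ) (by omega) := by
        have hj : j = (⟨(i:ℕ)+1, by omega⟩ : Fin M) := Fin.ext hij.symm
        have hi' : i = (⟨(i:ℕ), i.isLt⟩ : Fin M) := Fin.ext rfl
        rw [sw]; exact congrArg₂ Equiv.swap hi' hj
    · rw [hT, hsw]
    · rw [hT, hsw, mul_assoc, ← hsw, Equiv.swap_mul_self, mul_one]
  · rintro ⟨p, hp, rfl⟩
    constructor
    · intro h
      exact sw_ne_one hp (mul_left_cancel (a := σ) (by rw [mul_one, ← h]))
    · left
      exact ⟨⟨p, Nat.lt_of_succ_lt hp⟩, ⟨p+1, hp⟩, rfl, rfl⟩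

section Generic
variable {W : Type*} {G : SimpleGraph W}

lemma norm4 {C : Set (Sym2 W)} (h : IsInduced4Cycle G C) {x y : W} (he : s(x,y) ∈ C) :
    ∃ c w : W, G.Adj y c ∧ G.Adj c w ∧ G.Adj w x ∧ ¬ G.Adj x c ∧ ¬ G.Adj y w ∧
      x ≠ c ∧ y ≠ w ∧ C = {s(x,y), s(y,c), s(c,w), s(w,x)} := by
  obtain ⟨a, b, c, d, hac, hbd, hab, hbc, hcd, hda, nac, nbd, rfl⟩ := h
  have sw1 : s(b,a) = s(a,b) := Sym2.eq_swap
  have sw2 : s(c,b) = s(b,c) := Sym2.eq_swap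
  have sw3 : s(d,c) = s(c,d) := Sym2.eq_swap
  have sw4 : s(a,d) = s(d,a) := Sym2.eq_swap
  simp only [Set.mem_insert_iff, Set.mem_singleton_iff, Sym2.eq_iff] at he
  obtain (⟨rfl,rfl⟩|⟨rfl,rfl⟩)|(⟨rfl,rfl⟩|⟨rfl,rfl⟩)|(⟨rfl,rfl⟩|⟨rfl,rfl⟩)|(⟨rfl,rfl⟩|⟨rfl,rfl⟩) := he
  · exact ⟨c, d, hbc, hcd, hda, nac, nbd, hac, hbd, rfl⟩
  · refine ⟨d, c, hda.symm, hcd.symm, hbc.symm, nbd, nac, hbd, hac, ?_⟩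
    rw [sw1, sw4, sw3, sw2]; ext z; simp only [Set.mem_insert_iff, Set.mem_singleton_iff]; tauto
  · refine ⟨d, a, hcd, hda, hab, nbd, fun h => nac h.symm, hbd, fun h => hac h.symm, ?_⟩
    ext z; simp only [Set.mem_insert_iff, Set.mem_singleton_iff]; tauto
  · refine ⟨a, d, hab.symm, hda.symm, hcd.symm, fun h => nac h.symm, nbd, fun h => hac h.symm, hbd, ?_⟩
    rw [sw2, sw1, sw4, sw3]; ext z; simp only [Set.mem_insert_iff, Set.mem_singleton_iff]; tauto
  · refine ⟨a, b, hda, hab, hbc, fun h => nac h.symm, fun h => nbd h.symm, fun h => hac h.symm, fun h => hbd h.symm, ?_⟩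
    ext z; simp only [Set.mem_insert_iff, Set.mem_singleton_iff]; tauto
  · refine ⟨b, a, hbc.symm, hab.symm, hda.symm, fun h => nbd h.symm, fun h => nac h.symm,
      fun h => hbd h.symm, fun h => hac h.symm, ?_⟩
    rw [sw3, sw2, sw1, sw4]; ext z; simp only [Set.mem_insert_iff, Set.mem_singleton_iff]; tauto
  · refine ⟨b, c, hab, hbc, hcd, fun h => nbd h.symm, nac, fun h => hbd h.symm, hac, ?_⟩
    ext z; simp only [Set.mem_insert_iff, Set.mem_singleton_iff]; tauto
  · refine ⟨c, b, hcd.symm, hbc.symm, hab.symm, nac, fun h => nbd h.symm, hac, fun h => hbd h.symm, ?_⟩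
    rw [sw4, sw3, sw2, sw1]; ext z; simp only [Set.mem_insert_iff, Set.mem_singleton_iff]; tauto

lemma heavy_glue {x y : W} (hxy : G.Adj x y) {I : Type*} [Fintype I] (c w : I → W)
    (hyc : ∀ t, G.Adj y (c t)) (hcw : ∀ t, G.Adj (c t) (w t)) (hwx : ∀ t, G.Adj (w t) x)
    (hxc : ∀ t, ¬ G.Adj x (c t)) (hyw : ∀ t, ¬ G.Adj y (w t))
    (hcx : ∀ t, c t ≠ x) (hwy : ∀ t, w t ≠ y)
    (hcinj : Function.Injective c) (hwinj : Function.Injective w)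
    (hcw2 : ∀ t t', c t ≠ w t') :
    ∃ 𝒞 : Set (Set (Sym2 W)), Fintype.card I ≤ 𝒞.ncard ∧
      (∀ C ∈ 𝒞, IsInduced4Cycle G C ∧ s(x,y) ∈ C) ∧
      ∀ C ∈ 𝒞, ∀ C' ∈ 𝒞, C ≠ C' → C ∩ C' = {s(x,y)} := by
  classical
  set f : I → Set (Sym2 W) := fun t => {s(x,y), s(y, c t), s(c t, w t), s(w t, x)} with hf
  have hxny : x ≠ y := G.ne_of_adj hxy
  have hcny : ∀ t, c t ≠ y := fun t h => G.loopless.irrefl y (h ▸ hyc t)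
  have hwnx : ∀ t, w t ≠ x := fun t h => G.loopless.irrefl x (h ▸ hwx t)
  have key : ∀ t t' (z : Sym2 W), t ≠ t' → z ∈ f t → z ∈ f t' → z = s(x,y) := by
    intro t t' z htt hz hz'
    simp only [hf, Set.mem_insert_iff, Set.mem_singleton_iff] at hz hz'
    rcases hz with rfl | rfl | rfl | rfl
    · rfl
    · rcases hz' with h | h | h | h
      · exact h
      · rcases Sym2.eq_iff.mp h with ⟨h1, h2⟩ | ⟨h1, h2⟩
        · exact absurd (hcinj h2) htt
        · exact absurd h2 (hcny t)
      · rcases Sym2.eq_iff.mp h with ⟨h1, h2⟩ | ⟨h1, h2⟩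
        · exact absurd h1.symm (hcny t')
        · exact absurd h1.symm (hwy t')
      · rcases Sym2.eq_iff.mp h with ⟨h1, h2⟩ | ⟨h1, h2⟩
        · exact absurd h2 (hcx t)
        · exact absurd h1.symm hxny
    · rcases hz' with h | h | h | h
      · exact absurd h (by
          rw [Sym2.eq_iff]; push_neg
          exact ⟨fun h1 => absurd h1 (hcx t), fun h1 => absurd h1 (hcny t)⟩)
      · rcases Sym2.eq_iff.mp h with ⟨h1, h2⟩ | ⟨h1, h2⟩
        · exact absurd h1 (hcny t)
        · exact absurd h2 (hwy t)
      · rcases Sym2.eq_iff.mp h with ⟨h1, h2⟩ | ⟨h1, h2⟩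
        · exact absurd (hcinj h1) htt
        · exact absurd h1 (hcw2 t t')
      · rcases Sym2.eq_iff.mp h with ⟨h1, h2⟩ | ⟨h1, h2⟩
        · exact absurd h1 (hcw2 t t')
        · exact absurd h1 (hcx t)
    · rcases hz' with h | h | h | h
      · exact absurd h (by
          rw [Sym2.eq_iff]; push_neg
          exact ⟨fun h1 => absurd h1 (hwnx t), fun h1 => absurd h1 (hwy t)⟩)
      · rcases Sym2.eq_iff.mp h with ⟨h1, h2⟩ | ⟨h1, h2⟩
        · exact absurd h1 (hwy t)
        · exact absurd h2 hxny
      · rcases Sym2.eq_iff.mp h with ⟨h1, h2⟩ | ⟨h1, h2⟩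
        · exact absurd h1.symm (hcw2 t' t)
        · exact absurd h2.symm (hcx t')
      · rcases Sym2.eq_iff.mp h with ⟨h1, h2⟩ | ⟨h1, h2⟩
        · exact absurd (hwinj h1) htt
        · exact absurd h1 (hwnx t)
  have finj : Function.Injective f := by
    intro t t' htt
    by_contra hne
    have hmem : s(y, c t) ∈ f t := by simp [hf]
    have := key t t' _ hne hmem (htt ▸ hmem)
    rcases Sym2.eq_iff.mp this with ⟨h1, h2⟩ | ⟨h1, h2⟩
    · exact hxny h1.symm
    · exact hcx t h2
  refine ⟨Set.range f, ?_, ?_, ?_⟩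
  · rw [← Nat.card_eq_fintype_card, ← Nat.card_range_of_injective finj, Nat.card_coe_set_eq]
  · rintro C ⟨t, rfl⟩
    refine ⟨⟨x, y, c t, w t, (hcx t).symm, (hwy t).symm, hxy, hyc t, hcw t, hwx t, hxc t, hyw t, rfl⟩, ?_⟩
    simp [hf]
  · rintro C ⟨t, rfl⟩ C' ⟨t', rfl⟩ hne
    have htt : t ≠ t' := fun h => hne (congrArg f h)
    ext z
    simp only [Set.mem_inter_iff, Set.mem_singleton_iff]
    constructor
    · rintro ⟨hz, hz'⟩; exact key t t' z htt hz hz'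
    · rintro rfl; constructor <;> simp [hf]
end Generic

section Prod
variable {k : ℕ} {m : Fin k → ℕ}

lemma mul_sw_ne {M p : ℕ} (hp : p + 1 < M) (σ : Equiv.Perm (Fin M)) :
    σ * sw M p hp ≠ σ := fun h => sw_ne_one hp (by
      have := mul_left_cancel (a := σ) (b := sw M p hp) (c := 1) (by rw [mul_one, h])
      exact this)

lemma sw_mul_self {M p : ℕ} (hp : p + 1 < M) : sw M p hp * sw M p hp = 1 :=
  Equiv.swap_mul_self _ _

lemma prod_adj_iff {x z : ∀ i : Fin k, Equiv.Perm (Fin (m i))} :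
    (prodPerm k m).Adj x z ↔
      ∃ i p, ∃ hp : p + 1 < m i, z = Function.update x i (x i * sw (m i) p hp) := by
  constructor
  · rintro ⟨i, hadj, hrest⟩
    obtain ⟨p, hp, hz⟩ := perm_adj.mp hadj
    refine ⟨i, p, hp, funext fun j => ?_⟩
    rcases eq_or_ne j i with rfl | hj
    · rw [Function.update_self, ← hz]
    · rw [Function.update_of_ne hj, (hrest j hj).symm]
  · rintro ⟨i, p, hp, rfl⟩
    refine ⟨i, ?_, fun j hj => (Function.update_of_ne hj _ _).symm⟩
    rw [Function.update_self]
    exact perm_adj.mpr ⟨p, hp, rfl⟩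

lemma adj_update {x : ∀ i : Fin k, Equiv.Perm (Fin (m i))} {i : Fin k} {p : ℕ}
    (hp : p + 1 < m i) :
    (prodPerm k m).Adj x (Function.update x i (x i * sw (m i) p hp)) :=
  prod_adj_iff.mpr ⟨i, p, hp, rfl⟩

lemma prod_nadj_two {x z : ∀ i : Fin k, Equiv.Perm (Fin (m i))} {i l : Fin k} (hil : i ≠ l)
    (hi : z i ≠ x i) (hl : z l ≠ x l) : ¬ (prodPerm k m).Adj x z := by
  rintro ⟨j, hadj, hrest⟩
  rcases eq_or_ne j i with rfl | hj
  · exact hl (hrest l (fun h => hil h.symm)).symm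
  · exact hi (hrest i (fun h => hj h.symm)).symm

lemma prod_nadj_one {x : ∀ i : Fin k, Equiv.Perm (Fin (m i))} {i : Fin k}
    {v : Equiv.Perm (Fin (m i))}
    (hv : ∀ p (hp : p + 1 < m i), v ≠ x i * sw (m i) p hp) :
    ¬ (prodPerm k m).Adj x (Function.update x i v) := by
  intro h
  obtain ⟨i', p, hp, he⟩ := prod_adj_iff.mp h
  rcases eq_or_ne i' i with rfl | hne
  · have := congrFun he i'
    rw [Function.update_self, Function.update_self] at this
    exact hv p hp this
  · have h1 := congrFun he i'
    rw [Function.update_of_ne hne, Function.update_self] at h1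
    exact mul_sw_ne hp (x i') h1.symm
end Prod

lemma fin_pred_lt {M : ℕ} (q : Fin (M - 1)) : (q : ℕ) + 1 < M := by
  have := q.isLt; omega

/-- index type for the family of induced 4-cycles through an edge in coordinate `i`
with transposition index `a` -/
def Idx (k : ℕ) (m : Fin k → ℕ) (i : Fin k) (a : ℕ) :=
  (Σ l : {l : Fin k // l ≠ i}, Fin (m l.1 - 1)) ⊕
    {q : Fin (m i - 1) // (q : ℕ) + 2 ≤ a ∨ a + 2 ≤ (q : ℕ)}

instance (k : ℕ) (m : Fin k → ℕ) (i : Fin k) (a : ℕ) : Fintype (Idx k m i a) := by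
  unfold Idx; infer_instance

def ccF {k : ℕ} {m : Fin k → ℕ} (x y : ∀ j : Fin k, Equiv.Perm (Fin (m j))) (i : Fin k)
    (a : ℕ) (ha : a + 1 < m i) : Idx k m i a → ∀ j : Fin k, Equiv.Perm (Fin (m j))
  | Sum.inl ⟨⟨l, _⟩, t⟩ => Function.update y l (y l * sw (m l) t (fin_pred_lt t))
  | Sum.inr ⟨q, _⟩ =>
      Function.update x i (x i * (sw (m i) a ha * sw (m i) q (fin_pred_lt q)))

def wwF {k : ℕ} {m : Fin k → ℕ} (x : ∀ j : Fin k, Equiv.Perm (Fin (m j))) (i : Fin k)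
    (a : ℕ) : Idx k m i a → ∀ j : Fin k, Equiv.Perm (Fin (m j))
  | Sum.inl ⟨⟨l, _⟩, t⟩ => Function.update x l (x l * sw (m l) t (fin_pred_lt t))
  | Sum.inr ⟨q, _⟩ => Function.update x i (x i * sw (m i) q (fin_pred_lt q))

theorem part1 (k : ℕ) (m : Fin k → ℕ) (h2 : ∀ i, 2 ≤ m i) :
    IsHeavy (prodPerm k m) (∑ i, m i - k - 3) := by
  classical
  intro e he
  induction e using Sym2.ind with
  | _ x y =>
  rw [SimpleGraph.mem_edgeSet] at he
  obtain ⟨i, a, ha, hy⟩ := prod_adj_iff.mp he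
  have hyi : y i = x i * sw (m i) a ha := by rw [hy, Function.update_self]
  have hyl : ∀ l : Fin k, l ≠ i → y l = x l := by
    intro l hl; rw [hy, Function.update_of_ne hl]
  set cc := ccF x y i a ha with hcc
  set ww := wwF x i a with hww
  -- adjacency facts
  have hyc : ∀ T, (prodPerm k m).Adj y (cc T) := by
    rintro (⟨⟨l, hl⟩, t⟩ | ⟨q, hq⟩)
    · exact adj_update (fin_pred_lt t)
    · show (prodPerm k m).Adj y
        (Function.update x i (x i * (sw (m i) a ha * sw (m i) q (fin_pred_lt q))))
      have hrw : Function.update x i (x i * (sw (m i) a ha * sw (m i) q (fin_pred_lt q)))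
          = Function.update y i (y i * sw (m i) q (fin_pred_lt q)) := by
        rw [hyi, hy, Function.update_idem, mul_assoc]
      rw [hrw]
      exact adj_update (fin_pred_lt q)
  have hwx : ∀ T, (prodPerm k m).Adj (ww T) x := by
    rintro (⟨⟨l, hl⟩, t⟩ | ⟨q, hq⟩)
    · exact (adj_update (fin_pred_lt t)).symm
    · exact (adj_update (fin_pred_lt q)).symm
  have hcw : ∀ T, (prodPerm k m).Adj (cc T) (ww T) := by
    rintro (⟨⟨l, hl⟩, t⟩ | ⟨q, hq⟩)
    · show (prodPerm k m).Adj (Function.update y l (y l * sw (m l) t (fin_pred_lt t)))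
        (Function.update x l (x l * sw (m l) t (fin_pred_lt t)))
      have hrw : Function.update y l (y l * sw (m l) t (fin_pred_lt t)) =
          Function.update (Function.update x l (x l * sw (m l) t (fin_pred_lt t))) i
            ((Function.update x l (x l * sw (m l) t (fin_pred_lt t))) i * sw (m i) a ha) := by
        rw [Function.update_of_ne (fun h => hl h.symm : i ≠ l), hyl l hl, hy,
          Function.update_comm hl]
      rw [hrw]
      exact (adj_update ha).symm
    · show (prodPerm k m).Adj
        (Function.update x i (x i * (sw (m i) a ha * sw (m i) q (fin_pred_lt q))))
        (Function.update x i (x i * sw (m i) q (fin_pred_lt q)))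
      have hrw : Function.update x i (x i * (sw (m i) a ha * sw (m i) q (fin_pred_lt q))) =
          Function.update (Function.update x i (x i * sw (m i) q (fin_pred_lt q))) i
            ((Function.update x i (x i * sw (m i) q (fin_pred_lt q))) i * sw (m i) a ha) := by
        rw [Function.update_idem, Function.update_self, mul_assoc,
          sw_comm (fin_pred_lt q) ha (by rcases hq with h | h <;> omega)]
      rw [hrw]
      exact (adj_update ha).symm
  have hxc : ∀ T, ¬ (prodPerm k m).Adj x (cc T) := by
    rintro (⟨⟨l, hl⟩, t⟩ | ⟨q, hq⟩)
    · refine prod_nadj_two (fun h => hl h.symm : i ≠ l) ?_ ?_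
      · show Function.update y l (y l * sw (m l) t (fin_pred_lt t)) i ≠ x i
        rw [Function.update_of_ne (fun h => hl h.symm : i ≠ l), hyi]
        exact mul_sw_ne ha (x i)
      · show Function.update y l (y l * sw (m l) t (fin_pred_lt t)) l ≠ x l
        rw [Function.update_self, hyl l hl]
        exact mul_sw_ne (fin_pred_lt t) (x l)
    · refine prod_nadj_one (fun p hp hc => ?_)
      have h1 : sw (m i) a ha * sw (m i) q (fin_pred_lt q) = sw (m i) p hp :=
        mul_left_cancel hc
      exact sw_mul_ne_sw ha (fin_pred_lt q) hp (by rcases hq with h | h <;> omega) h1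
  have hyw : ∀ T, ¬ (prodPerm k m).Adj y (ww T) := by
    rintro (⟨⟨l, hl⟩, t⟩ | ⟨q, hq⟩)
    · refine prod_nadj_two (fun h => hl h.symm : i ≠ l) ?_ ?_
      · show Function.update x l (x l * sw (m l) t (fin_pred_lt t)) i ≠ y i
        rw [Function.update_of_ne (fun h => hl h.symm : i ≠ l), hyi]
        exact fun h => mul_sw_ne ha (x i) h.symm
      · show Function.update x l (x l * sw (m l) t (fin_pred_lt t)) l ≠ y l
        rw [Function.update_self, hyl l hl]
        exact mul_sw_ne (fin_pred_lt t) (x l)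
    · show ¬ (prodPerm k m).Adj y (Function.update x i (x i * sw (m i) q (fin_pred_lt q)))
      have hrw : Function.update x i (x i * sw (m i) q (fin_pred_lt q)) =
          Function.update y i (x i * sw (m i) q (fin_pred_lt q)) := by
        rw [hy, Function.update_idem]
      rw [hrw]
      refine prod_nadj_one (fun p hp hc => ?_)
      rw [hyi, mul_assoc] at hc
      have h1 : sw (m i) q (fin_pred_lt q) = sw (m i) a ha * sw (m i) p hp :=
        mul_left_cancel hc
      have h2 : sw (m i) a ha * sw (m i) q (fin_pred_lt q) = sw (m i) p hp := by
        rw [h1, ← mul_assoc, sw_mul_self, one_mul]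
      exact sw_mul_ne_sw ha (fin_pred_lt q) hp (by rcases hq with h | h <;> omega) h2
  have hcx : ∀ T, cc T ≠ x := by
    rintro (⟨⟨l, hl⟩, t⟩ | ⟨q, hq⟩) h
    · have h0 : Function.update y l (y l * sw (m l) t (fin_pred_lt t)) i = x i := congrFun h i
      rw [Function.update_of_ne (fun hh => hl hh.symm : i ≠ l), hyi] at h0
      exact mul_sw_ne ha (x i) h0
    · have h0 : Function.update x i
          (x i * (sw (m i) a ha * sw (m i) q (fin_pred_lt q))) i = x i := congrFun h i
      rw [Function.update_self] at h0
      exact sw_mul_ne_one ha (fin_pred_lt q) (by rcases hq with h' | h' <;> omega)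
        (mul_left_cancel (a := x i) (by rw [mul_one, h0]))
  have hwy : ∀ T, ww T ≠ y := by
    rintro (⟨⟨l, hl⟩, t⟩ | ⟨q, hq⟩) h
    · have h0 : Function.update x l (x l * sw (m l) t (fin_pred_lt t)) l = y l := congrFun h l
      rw [Function.update_self, hyl l hl] at h0
      exact mul_sw_ne (fin_pred_lt t) (x l) h0
    · have h0 : Function.update x i (x i * sw (m i) q (fin_pred_lt q)) i = y i := congrFun h i
      rw [Function.update_self, hyi] at h0
      have h1 : sw (m i) q (fin_pred_lt q) = sw (m i) a ha := mul_left_cancel h0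
      have h2 := sw_injective (fin_pred_lt q) ha h1
      rcases hq with h' | h' <;> omega
  have hcw2 : ∀ T T', cc T ≠ ww T' := by
    rintro (⟨⟨l, hl⟩, t⟩ | ⟨q, hq⟩) (⟨⟨l', hl'⟩, t'⟩ | ⟨q', hq'⟩) h
    · have h0 : Function.update y l (y l * sw (m l) t (fin_pred_lt t)) i
          = Function.update x l' (x l' * sw (m l') t' (fin_pred_lt t')) i := congrFun h i
      rw [Function.update_of_ne (fun e => hl e.symm : i ≠ l),
        Function.update_of_ne (fun e => hl' e.symm : i ≠ l'), hyi] at h0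
      exact mul_sw_ne ha (x i) h0
    · have h0 : Function.update y l (y l * sw (m l) t (fin_pred_lt t)) i
          = Function.update x i (x i * sw (m i) q' (fin_pred_lt q')) i := congrFun h i
      rw [Function.update_of_ne (fun e => hl e.symm : i ≠ l), hyi, Function.update_self] at h0
      have h1 : sw (m i) a ha = sw (m i) q' (fin_pred_lt q') := mul_left_cancel h0
      have h2 := sw_injective ha (fin_pred_lt q') h1
      rcases hq' with h' | h' <;> omega
    · have h0 : Function.update x i (x i * (sw (m i) a ha * sw (m i) q (fin_pred_lt q))) i
          = Function.update x l' (x l' * sw (m l') t' (fin_pred_lt t')) i := congrFun h i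
      rw [Function.update_self, Function.update_of_ne (fun e => hl' e.symm : i ≠ l')] at h0
      exact sw_mul_ne_one ha (fin_pred_lt q) (by rcases hq with h' | h' <;> omega)
        (mul_left_cancel (a := x i) (by rw [mul_one, h0]))
    · have h0 : Function.update x i (x i * (sw (m i) a ha * sw (m i) q (fin_pred_lt q))) i
          = Function.update x i (x i * sw (m i) q' (fin_pred_lt q')) i := congrFun h i
      rw [Function.update_self, Function.update_self] at h0
      exact sw_mul_ne_sw ha (fin_pred_lt q) (fin_pred_lt q')
        (by rcases hq with h' | h' <;> omega) (mul_left_cancel h0)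
  have hcinj : Function.Injective cc := by
    rintro (⟨⟨l, hl⟩, t⟩ | ⟨q, hq⟩) (⟨⟨l', hl'⟩, t'⟩ | ⟨q', hq'⟩) h
    · rcases eq_or_ne l l' with rfl | hll
      · have h0 : Function.update y l (y l * sw (m l) t (fin_pred_lt t)) l
            = Function.update y l (y l * sw (m l) t' (fin_pred_lt t')) l := congrFun h l
        rw [Function.update_self, Function.update_self] at h0
        have ht := sw_injective (fin_pred_lt t) (fin_pred_lt t') (mul_left_cancel h0)
        have htt : t = t' := Fin.ext ht
        subst htt
        rfl
      · exfalso
        have h0 : Function.update y l (y l * sw (m l) t (fin_pred_lt t)) l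
            = Function.update y l' (y l' * sw (m l') t' (fin_pred_lt t')) l := congrFun h l
        rw [Function.update_self, Function.update_of_ne hll] at h0
        exact mul_sw_ne (fin_pred_lt t) (y l) h0
    · exfalso
      have h0 : Function.update y l (y l * sw (m l) t (fin_pred_lt t)) l
          = Function.update x i (x i * (sw (m i) a ha * sw (m i) q' (fin_pred_lt q'))) l :=
        congrFun h l
      rw [Function.update_self, Function.update_of_ne hl, hyl l hl] at h0
      exact mul_sw_ne (fin_pred_lt t) (x l) h0
    · exfalso
      have h0 : Function.update x i (x i * (sw (m i) a ha * sw (m i) q (fin_pred_lt q))) l'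
          = Function.update y l' (y l' * sw (m l') t' (fin_pred_lt t')) l' := congrFun h l'
      rw [Function.update_self, Function.update_of_ne hl', hyl l' hl'] at h0
      exact mul_sw_ne (fin_pred_lt t') (x l') h0.symm
    · have h0 : Function.update x i (x i * (sw (m i) a ha * sw (m i) q (fin_pred_lt q))) i
          = Function.update x i (x i * (sw (m i) a ha * sw (m i) q' (fin_pred_lt q'))) i :=
        congrFun h i
      rw [Function.update_self, Function.update_self] at h0
      have h1 := mul_left_cancel (mul_left_cancel h0)
      have hqq : q = q' := Fin.ext (sw_injective (fin_pred_lt q) (fin_pred_lt q') h1)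
      subst hqq
      rfl
  have hwinj : Function.Injective ww := by
    rintro (⟨⟨l, hl⟩, t⟩ | ⟨q, hq⟩) (⟨⟨l', hl'⟩, t'⟩ | ⟨q', hq'⟩) h
    · rcases eq_or_ne l l' with rfl | hll
      · have h0 : Function.update x l (x l * sw (m l) t (fin_pred_lt t)) l
            = Function.update x l (x l * sw (m l) t' (fin_pred_lt t')) l := congrFun h l
        rw [Function.update_self, Function.update_self] at h0
        have ht := sw_injective (fin_pred_lt t) (fin_pred_lt t') (mul_left_cancel h0)
        have htt : t = t' := Fin.ext ht
        subst htt
        rfl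
      · exfalso
        have h0 : Function.update x l (x l * sw (m l) t (fin_pred_lt t)) l
            = Function.update x l' (x l' * sw (m l') t' (fin_pred_lt t')) l := congrFun h l
        rw [Function.update_self, Function.update_of_ne hll] at h0
        exact mul_sw_ne (fin_pred_lt t) (x l) h0
    · exfalso
      have h0 : Function.update x l (x l * sw (m l) t (fin_pred_lt t)) l
          = Function.update x i (x i * sw (m i) q' (fin_pred_lt q')) l := congrFun h l
      rw [Function.update_self, Function.update_of_ne hl] at h0
      exact mul_sw_ne (fin_pred_lt t) (x l) h0
    · exfalso
      have h0 : Function.update x i (x i * sw (m i) q (fin_pred_lt q)) l'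
          = Function.update x l' (x l' * sw (m l') t' (fin_pred_lt t')) l' := congrFun h l'
      rw [Function.update_self, Function.update_of_ne hl'] at h0
      exact mul_sw_ne (fin_pred_lt t') (x l') h0.symm
    · have h0 : Function.update x i (x i * sw (m i) q (fin_pred_lt q)) i
          = Function.update x i (x i * sw (m i) q' (fin_pred_lt q')) i := congrFun h i
      rw [Function.update_self, Function.update_self] at h0
      have hqq : q = q' :=
        Fin.ext (sw_injective (fin_pred_lt q) (fin_pred_lt q') (mul_left_cancel h0))
      subst hqq
      rfl
  obtain ⟨𝒞, hcard, hmem, hint⟩ :=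
    heavy_glue he cc ww hyc hcw hwx hxc hyw hcx hwy hcinj hwinj hcw2
  refine ⟨𝒞, le_trans ?_ hcard, hmem, hint⟩
  -- cardinality bound
  have hIcard : Fintype.card (Idx k m i a) =
      Fintype.card (Σ l : {l : Fin k // l ≠ i}, Fin (m l.1 - 1)) +
      Fintype.card {q : Fin (m i - 1) // (q : ℕ) + 2 ≤ a ∨ a + 2 ≤ (q : ℕ)} :=
    Fintype.card_sum
  have hsig : Fintype.card (Σ l : {l : Fin k // l ≠ i}, Fin (m l.1 - 1)) =
      ∑ l ∈ Finset.univ.erase i, (m l - 1) := by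
    rw [Fintype.card_sigma]
    simp only [Fintype.card_fin]
    exact (Finset.sum_subtype (Finset.univ.erase i)
      (fun l => by simp [Finset.mem_erase]) (fun l => m l - 1)).symm
  have herase : m i - 1 + ∑ l ∈ Finset.univ.erase i, (m l - 1) = ∑ l, (m l - 1) :=
    Finset.add_sum_erase _ (fun l => m l - 1) (Finset.mem_univ i)
  have hsum1 : ∑ l, (m l - 1) + k = ∑ l, m l := by
    calc ∑ l, (m l - 1) + k = ∑ l, (m l - 1) + ∑ _l : Fin k, 1 := by
          rw [Finset.sum_const, smul_eq_mul, mul_one, Finset.card_univ, Fintype.card_fin]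
      _ = ∑ l, ((m l - 1) + 1) := Finset.sum_add_distrib.symm
      _ = ∑ l, m l := Finset.sum_congr rfl (fun l _ => by have := h2 l; omega)
  have hsub : Fintype.card {q : Fin (m i - 1) // (q : ℕ) + 2 ≤ a ∨ a + 2 ≤ (q : ℕ)} + 3
      ≥ m i - 1 := by
    rw [Fintype.card_subtype]
    have hsplit := Finset.card_filter_add_card_filter_not
      (s := (Finset.univ : Finset (Fin (m i - 1))))
      (p := fun q => (q : ℕ) + 2 ≤ a ∨ a + 2 ≤ (q : ℕ))
    have hneg : (Finset.univ.filter
        (fun q : Fin (m i - 1) => ¬ ((q : ℕ) + 2 ≤ a ∨ a + 2 ≤ (q : ℕ)))).card ≤ 3 := by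
      refine le_trans (Finset.card_le_card_of_injOn (t := Finset.range 3)
        (fun q => (q : ℕ) + 1 - a) ?_ ?_) (by simp)
      · intro q hq
        simp only [Finset.mem_coe, Finset.mem_filter] at hq
        simp only [Finset.mem_coe, Finset.mem_range]
        omega
      · intro q1 hq1 q2 hq2 hqq
        simp only [Finset.mem_coe, Finset.mem_filter] at hq1 hq2
        have hqq' : (q1 : ℕ) + 1 - a = (q2 : ℕ) + 1 - a := hqq
        exact Fin.ext (by omega)
    have hcardfin : (Finset.univ : Finset (Fin (m i - 1))).card = m i - 1 := by simp
    omega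
  have hmi : m i - 1 ≤ ∑ l, (m l - 1) :=
    Finset.single_le_sum (f := fun l => m l - 1) (fun _ _ => Nat.zero_le _) (Finset.mem_univ i)
  omega

section Counting
variable {W : Type*} [Fintype W] [DecidableEq W] {G : SimpleGraph W}

omit [Fintype W] [DecidableEq W] in
lemma matching_cov {M : Set (Sym2 W)} (hM : IsMaximalMatching G M)
    {u v : W} (hu : ¬ Covered M u) (huv : G.Adj u v) : Covered M v := by
  by_contra hv
  have hne : s(u,v) ∉ M := fun h => hu ⟨s(u,v), h, Sym2.mem_mk_left u v⟩
  have hmatch : IsMatching G (insert s(u,v) M) := by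
    constructor
    · intro e he
      rcases Set.mem_insert_iff.mp he with rfl | he'
      · exact huv
      · exact hM.1.1 he'
    · intro e he f hf hef z hze hzf
      rcases Set.mem_insert_iff.mp he with rfl | he' <;>
        rcases Set.mem_insert_iff.mp hf with rfl | hf'
      · exact hef rfl
      · rcases Sym2.mem_iff.mp hze with rfl | rfl
        · exact hu ⟨f, hf', hzf⟩
        · exact hv ⟨f, hf', hzf⟩
      · rcases Sym2.mem_iff.mp hzf with rfl | rfl
        · exact hu ⟨e, he', hze⟩
        · exact hv ⟨e, he', hze⟩
      · exact hM.1.2 e he' f hf' hef z hze hzf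
  have := hM.2 _ hmatch (Set.subset_insert _ _)
  exact hne (this ▸ Set.mem_insert _ M)

lemma crux [DecidableRel G.Adj] {M : Set (Sym2 W)} [DecidablePred (Covered M)]
    {d α : ℕ} (hreg : ∀ v, (G.neighborFinset v).card = d) (hheavy : IsHeavy G α)
    (hα : d ≤ α + 3) (hM : IsMaximalMatching G M)
    {x y : W} (hxy : G.Adj x y) (hycov : Covered M y) (hxcov : Covered M x) :
    (Finset.univ.filter (fun u => ¬ Covered M u ∧ G.Adj u x)).card +
      (Finset.univ.filter (fun u => ¬ Covered M u ∧ G.Adj u y)).card ≤ d + 1 := by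
  classical
  obtain ⟨𝒞, hαcard, hmem, hint⟩ := hheavy s(x,y) (G.mem_edgeSet.mpr hxy)
  have h𝒞fin : 𝒞.Finite := Set.toFinite _
  set CF := h𝒞fin.toFinset with hCF
  have hxny : x ≠ y := G.ne_of_adj hxy
  have hex : ∀ C : Set (Sym2 W), ∃ cw : W × W, C ∈ CF →
      G.Adj y cw.1 ∧ G.Adj cw.1 cw.2 ∧ G.Adj cw.2 x ∧ x ≠ cw.1 ∧ y ≠ cw.2 ∧
      s(y, cw.1) ∈ C ∧ s(cw.2, x) ∈ C := by
    intro C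
    by_cases hC : C ∈ CF
    · obtain ⟨hcyc, hmemC⟩ := hmem C (h𝒞fin.mem_toFinset.mp hC)
      obtain ⟨c, w, hyc, hcw, hwx, _, _, hxc, hyw, hCeq⟩ := norm4 hcyc hmemC
      exact ⟨(c, w), fun _ => ⟨hyc, hcw, hwx, hxc, hyw,
        by rw [hCeq]; exact Or.inr (Or.inl rfl),
        by rw [hCeq]; exact Or.inr (Or.inr (Or.inr rfl))⟩⟩
    · exact ⟨(x, x), fun h => absurd h hC⟩
  choose f hf using hex
  have hCFmem : ∀ C ∈ CF, C ∈ 𝒞 := fun C hC => h𝒞fin.mem_toFinset.mp hC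
  have honly : ∀ C ∈ CF, ∀ C' ∈ CF, C ≠ C' → ∀ z, z ∈ C → z ∈ C' → z = s(x,y) := by
    intro C hC C' hC' hne z hz hz'
    have := hint C (hCFmem C hC) C' (hCFmem C' hC') hne
    have hzm : z ∈ C ∩ C' := ⟨hz, hz'⟩
    rw [this] at hzm
    exact hzm
  have hcinj : ∀ C ∈ CF, ∀ C' ∈ CF, (f C).1 = (f C').1 → C = C' := by
    intro C hC C' hC' hcc
    by_contra hne
    have h1 : s(y, (f C).1) ∈ C := (hf C hC).2.2.2.2.2.1
    have h2 : s(y, (f C).1) ∈ C' := by rw [hcc]; exact (hf C' hC').2.2.2.2.2.1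
    have := honly C hC C' hC' hne _ h1 h2
    rcases Sym2.eq_iff.mp this with ⟨h3, _⟩ | ⟨_, h4⟩
    · exact hxny h3.symm
    · exact (hf C hC).2.2.2.1 h4.symm
  have hwinj : ∀ C ∈ CF, ∀ C' ∈ CF, (f C).2 = (f C').2 → C = C' := by
    intro C hC C' hC' hww
    by_contra hne
    have h1 : s((f C).2, x) ∈ C := (hf C hC).2.2.2.2.2.2
    have h2 : s((f C).2, x) ∈ C' := by rw [hww]; exact (hf C' hC').2.2.2.2.2.2
    have := honly C hC C' hC' hne _ h1 h2
    rcases Sym2.eq_iff.mp this with ⟨_, h4⟩ | ⟨h3, _⟩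
    · exact hxny h4
    · exact (hf C hC).2.2.2.2.1 h3.symm
  have hcover : ∀ C ∈ CF, Covered M (f C).1 ∨ Covered M (f C).2 := by
    intro C hC
    by_cases hc : Covered M (f C).1
    · exact Or.inl hc
    · exact Or.inr (matching_cov hM hc (hf C hC).2.1)
  set Cw := CF.filter (fun C => Covered M (f C).2) with hCw
  set Cc := CF.filter (fun C => Covered M (f C).1) with hCc
  have hsplitC : CF.card ≤ Cw.card + Cc.card := by
    refine le_trans (Finset.card_le_card (fun C hC => ?_)) (Finset.card_union_le _ _)
    rcases hcover C hC with h | h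
    · exact Finset.mem_union_right _ (Finset.mem_filter.mpr ⟨hC, h⟩)
    · exact Finset.mem_union_left _ (Finset.mem_filter.mpr ⟨hC, h⟩)
  -- the x side
  have hxside : (Finset.univ.filter (fun u => ¬ Covered M u ∧ G.Adj u x)).card + Cw.card
      ≤ d - 1 := by
    set Ax := Finset.univ.filter (fun u => ¬ Covered M u ∧ G.Adj u x) with hAx
    set Wimg := Cw.image (fun C => (f C).2) with hWimg
    have hWcard : Wimg.card = Cw.card := by
      apply Finset.card_image_of_injOn
      intro C hC C' hC' h
      exact hwinj C (Finset.mem_filter.mp hC).1 C' (Finset.mem_filter.mp hC').1 h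
    have hsub : Ax ∪ Wimg ⊆ (G.neighborFinset x).erase y := by
      intro u hu
      rcases Finset.mem_union.mp hu with h | h
      · obtain ⟨_, hu1, hu2⟩ := Finset.mem_filter.mp h
        exact Finset.mem_erase.mpr ⟨fun he => hu1 (he ▸ hycov),
          (SimpleGraph.mem_neighborFinset _ _ _).mpr hu2.symm⟩
      · obtain ⟨C, hC, rfl⟩ := Finset.mem_image.mp h
        have hC' := (Finset.mem_filter.mp hC).1
        exact Finset.mem_erase.mpr ⟨fun he => (hf C hC').2.2.2.2.1 he.symm,
          (SimpleGraph.mem_neighborFinset _ _ _).mpr ((hf C hC').2.2.1).symm⟩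
    have hdisj : Disjoint Ax Wimg := by
      rw [Finset.disjoint_left]
      intro u hu hu'
      obtain ⟨_, hu1, _⟩ := Finset.mem_filter.mp hu
      obtain ⟨C, hC, rfl⟩ := Finset.mem_image.mp hu'
      exact hu1 (Finset.mem_filter.mp hC).2
    have hcarderase : ((G.neighborFinset x).erase y).card = d - 1 := by
      rw [Finset.card_erase_of_mem ((SimpleGraph.mem_neighborFinset _ _ _).mpr hxy), hreg]
    calc Ax.card + Cw.card = Ax.card + Wimg.card := by rw [hWcard]
      _ = (Ax ∪ Wimg).card := (Finset.card_union_of_disjoint hdisj).symm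
      _ ≤ _ := Finset.card_le_card hsub
      _ = d - 1 := hcarderase
  -- the y side
  have hyside : (Finset.univ.filter (fun u => ¬ Covered M u ∧ G.Adj u y)).card + Cc.card
      ≤ d - 1 := by
    set Ay := Finset.univ.filter (fun u => ¬ Covered M u ∧ G.Adj u y) with hAy
    set Cimg := Cc.image (fun C => (f C).1) with hCimg
    have hCcard : Cimg.card = Cc.card := by
      apply Finset.card_image_of_injOn
      intro C hC C' hC' h
      exact hcinj C (Finset.mem_filter.mp hC).1 C' (Finset.mem_filter.mp hC').1 h
    have hsub : Ay ∪ Cimg ⊆ (G.neighborFinset y).erase x := by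
      intro u hu
      rcases Finset.mem_union.mp hu with h | h
      · obtain ⟨_, hu1, hu2⟩ := Finset.mem_filter.mp h
        exact Finset.mem_erase.mpr ⟨fun he => hu1 (he ▸ hxcov),
          (SimpleGraph.mem_neighborFinset _ _ _).mpr hu2.symm⟩
      · obtain ⟨C, hC, rfl⟩ := Finset.mem_image.mp h
        have hC' := (Finset.mem_filter.mp hC).1
        exact Finset.mem_erase.mpr ⟨fun he => (hf C hC').2.2.2.1 he.symm,
          (SimpleGraph.mem_neighborFinset _ _ _).mpr (hf C hC').1⟩
    have hdisj : Disjoint Ay Cimg := by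
      rw [Finset.disjoint_left]
      intro u hu hu'
      obtain ⟨_, hu1, _⟩ := Finset.mem_filter.mp hu
      obtain ⟨C, hC, rfl⟩ := Finset.mem_image.mp hu'
      exact hu1 (Finset.mem_filter.mp hC).2
    have hcarderase : ((G.neighborFinset y).erase x).card = d - 1 := by
      rw [Finset.card_erase_of_mem ((SimpleGraph.mem_neighborFinset _ _ _).mpr hxy.symm), hreg]
    calc Ay.card + Cc.card = Ay.card + Cimg.card := by rw [hCcard]
      _ = (Ay ∪ Cimg).card := (Finset.card_union_of_disjoint hdisj).symm
      _ ≤ _ := Finset.card_le_card hsub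
      _ = d - 1 := hcarderase
  have hd1 : 1 ≤ d := by
    have : y ∈ G.neighborFinset x := (SimpleGraph.mem_neighborFinset _ _ _).mpr hxy
    have := Finset.card_pos.mpr ⟨y, this⟩
    rw [hreg] at this
    exact this
  have hCFcard : α ≤ CF.card := by
    rwa [hCF, ← Set.ncard_eq_toFinset_card]
  omega
end Counting

lemma count_main {W : Type*} [Fintype W] [DecidableEq W] {G : SimpleGraph W}
    [DecidableRel G.Adj] {M : Set (Sym2 W)} [DecidablePred (Covered M)]
    {d α : ℕ} (hreg : ∀ v, (G.neighborFinset v).card = d) (hheavy : IsHeavy G α)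
    (hα : d ≤ α + 3) (hM : IsMaximalMatching G M) :
    d * Fintype.card W ≤ (3 * d + 1) * M.ncard := by
  classical
  have hMfin : M.Finite := Set.toFinite _
  set MF := hMfin.toFinset with hMFdef
  have hMcard : M.ncard = MF.card := Set.ncard_eq_toFinset_card _ _
  have hMFedge : ∀ e ∈ MF, e ∈ G.edgeSet := fun e he => hM.1.1 (hMfin.mem_toFinset.mp he)
  set Vc := Finset.univ.filter (fun v => Covered M v) with hVcdef
  set Uf := Finset.univ.filter (fun v => ¬ Covered M v) with hUfdef
  -- each matched edge has exactly 2 endpoints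
  have hend : ∀ e ∈ MF, (Finset.univ.filter (fun v => v ∈ e)).card = 2 := by
    intro e he
    have hedge := hMFedge e he
    induction e using Sym2.ind with
    | _ x y =>
    rw [SimpleGraph.mem_edgeSet] at hedge
    have : Finset.univ.filter (fun v => v ∈ s(x,y)) = {x, y} := by
      ext v
      simp [Sym2.mem_iff]
    rw [this]
    exact Finset.card_pair (G.ne_of_adj hedge)
  -- covered vertices split into matched edges
  have hVc : Vc = MF.biUnion (fun e => Finset.univ.filter (fun v => v ∈ e)) := by
    ext v
    simp only [hVcdef, Finset.mem_filter, Finset.mem_univ, true_and, Finset.mem_biUnion]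
    constructor
    · rintro ⟨e, heM, hve⟩
      exact ⟨e, hMfin.mem_toFinset.mpr heM, by simp [hve]⟩
    · rintro ⟨e, heM, hve⟩
      exact ⟨e, hMfin.mem_toFinset.mp heM, hve⟩
  have hdisjE : ∀ e ∈ MF, ∀ f ∈ MF, e ≠ f →
      Disjoint (Finset.univ.filter (fun v => v ∈ e)) (Finset.univ.filter (fun v => v ∈ f)) := by
    intro e he f hf hef
    rw [Finset.disjoint_left]
    intro v hv hv'
    exact hM.1.2 e (hMfin.mem_toFinset.mp he) f (hMfin.mem_toFinset.mp hf) hef v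
      (Finset.mem_filter.mp hv).2 (Finset.mem_filter.mp hv').2
  have hVc2 : Vc.card = 2 * MF.card := by
    rw [hVc, Finset.card_biUnion hdisjE]
    rw [Finset.sum_congr rfl hend, Finset.sum_const, smul_eq_mul, mul_comm]
  have hcardW : Fintype.card W = Vc.card + Uf.card := by
    rw [hVcdef, hUfdef, Finset.card_filter_add_card_filter_not, Finset.card_univ]
  -- the pair count
  set Pf := Finset.univ.filter (fun p : W × W => ¬ Covered M p.1 ∧ G.Adj p.1 p.2) with hPfdef
  have hPf1 : Pf = Uf.biUnion (fun u => ({u} : Finset W) ×ˢ G.neighborFinset u) := by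
    ext p
    simp only [hPfdef, hUfdef, Finset.mem_filter, Finset.mem_univ, true_and,
      Finset.mem_biUnion, Finset.mem_product, Finset.mem_singleton,
      SimpleGraph.mem_neighborFinset]
    constructor
    · rintro ⟨h1, h2⟩
      exact ⟨p.1, h1, rfl, h2⟩
    · rintro ⟨u, hu, rfl, h2⟩
      exact ⟨hu, h2⟩
  have hPfcard : Pf.card = Uf.card * d := by
    rw [hPf1, Finset.card_biUnion]
    · have : ∀ u ∈ Uf, (({u} : Finset W) ×ˢ G.neighborFinset u).card = d := by
        intro u _
        rw [Finset.card_product, Finset.card_singleton, one_mul, hreg]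
      rw [Finset.sum_congr rfl this, Finset.sum_const, smul_eq_mul]
    · intro u hu u' hu' huu
      rw [Function.onFun, Finset.disjoint_left]
      rintro p hp hp'
      rw [Finset.mem_product, Finset.mem_singleton] at hp hp'
      exact huu (hp.1 ▸ hp'.1)
  have hPf2 : Pf = MF.biUnion (fun e => Pf.filter (fun p => p.2 ∈ e)) := by
    ext p
    simp only [Finset.mem_biUnion, Finset.mem_filter]
    constructor
    · intro hp
      have hp' := Finset.mem_filter.mp hp
      obtain ⟨e, heM, h2e⟩ := matching_cov (G := G) hM hp'.2.1 hp'.2.2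
      exact ⟨e, hMfin.mem_toFinset.mpr heM, hp, h2e⟩
    · rintro ⟨e, _, hp, _⟩
      exact hp
  have hPfdisj : ∀ e ∈ MF, ∀ f ∈ MF, e ≠ f →
      Disjoint (Pf.filter (fun p => p.2 ∈ e)) (Pf.filter (fun p => p.2 ∈ f)) := by
    intro e he f hf hef
    rw [Finset.disjoint_left]
    intro p hp hp'
    exact hM.1.2 e (hMfin.mem_toFinset.mp he) f (hMfin.mem_toFinset.mp hf) hef p.2
      (Finset.mem_filter.mp hp).2 (Finset.mem_filter.mp hp').2
  have hperedge : ∀ e ∈ MF, (Pf.filter (fun p => p.2 ∈ e)).card ≤ d + 1 := by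
    intro e he
    have hedge := hMFedge e he
    have heM : e ∈ M := hMfin.mem_toFinset.mp he
    induction e using Sym2.ind with
    | _ x y =>
    rw [SimpleGraph.mem_edgeSet] at hedge
    have hxcov : Covered M x := ⟨s(x,y), heM, Sym2.mem_mk_left x y⟩
    have hycov : Covered M y := ⟨s(x,y), heM, Sym2.mem_mk_right x y⟩
    have hsplit : Pf.filter (fun p => p.2 ∈ s(x,y)) =
        Pf.filter (fun p => p.2 = x) ∪ Pf.filter (fun p => p.2 = y) := by
      rw [← Finset.filter_or]
      exact Finset.filter_congr (fun p _ => by simp [Sym2.mem_iff])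
    have hbx : (Pf.filter (fun p => p.2 = x)).card ≤
        (Finset.univ.filter (fun u => ¬ Covered M u ∧ G.Adj u x)).card := by
      apply Finset.card_le_card_of_injOn (fun p => p.1)
      · intro p hp
        obtain ⟨hp1, hp2⟩ := Finset.mem_filter.mp hp
        obtain ⟨_, h1, h2⟩ := Finset.mem_filter.mp hp1
        exact Finset.mem_filter.mpr ⟨Finset.mem_univ _, h1, hp2 ▸ h2⟩
      · intro p hp q hq hpq
        have hp2 := (Finset.mem_filter.mp (Finset.mem_coe.mp hp)).2
        have hq2 := (Finset.mem_filter.mp (Finset.mem_coe.mp hq)).2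
        exact Prod.ext hpq (hp2.trans hq2.symm)
    have hby : (Pf.filter (fun p => p.2 = y)).card ≤
        (Finset.univ.filter (fun u => ¬ Covered M u ∧ G.Adj u y)).card := by
      apply Finset.card_le_card_of_injOn (fun p => p.1)
      · intro p hp
        obtain ⟨hp1, hp2⟩ := Finset.mem_filter.mp hp
        obtain ⟨_, h1, h2⟩ := Finset.mem_filter.mp hp1
        exact Finset.mem_filter.mpr ⟨Finset.mem_univ _, h1, hp2 ▸ h2⟩
      · intro p hp q hq hpq
        have hp2 := (Finset.mem_filter.mp (Finset.mem_coe.mp hp)).2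
        have hq2 := (Finset.mem_filter.mp (Finset.mem_coe.mp hq)).2
        exact Prod.ext hpq (hp2.trans hq2.symm)
    have hcrux := crux hreg hheavy hα hM hedge hycov hxcov
    calc (Pf.filter (fun p => p.2 ∈ s(x,y))).card
        ≤ (Pf.filter (fun p => p.2 = x)).card + (Pf.filter (fun p => p.2 = y)).card := by
          rw [hsplit]; exact Finset.card_union_le _ _
      _ ≤ _ + _ := Nat.add_le_add hbx hby
      _ ≤ d + 1 := hcrux
  have hPfle : Pf.card ≤ MF.card * (d + 1) := by
    rw [hPf2, Finset.card_biUnion hPfdisj]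
    calc ∑ e ∈ MF, (Pf.filter (fun p => p.2 ∈ e)).card
        ≤ ∑ _e ∈ MF, (d + 1) := Finset.sum_le_sum hperedge
      _ = MF.card * (d + 1) := by rw [Finset.sum_const, smul_eq_mul]
  have hUfle : Uf.card * d ≤ MF.card * (d + 1) := hPfcard ▸ hPfle
  calc d * Fintype.card W = d * (2 * MF.card) + Uf.card * d := by
        rw [hcardW, hVc2]; ring
    _ ≤ d * (2 * MF.card) + MF.card * (d + 1) := Nat.add_le_add_left hUfle _
    _ = (3 * d + 1) * MF.card := by ring
    _ = (3 * d + 1) * M.ncard := by rw [hMcard]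

lemma sum_pred {k : ℕ} {m : Fin k → ℕ} (h2 : ∀ i, 2 ≤ m i) :
    ∑ i, (m i - 1) = ∑ i, m i - k := by
  have hsum1 : ∑ l, (m l - 1) + k = ∑ l, m l := by
    calc ∑ l, (m l - 1) + k = ∑ l, (m l - 1) + ∑ _l : Fin k, 1 := by
          rw [Finset.sum_const, smul_eq_mul, mul_one, Finset.card_univ, Fintype.card_fin]
      _ = ∑ l, ((m l - 1) + 1) := Finset.sum_add_distrib.symm
      _ = ∑ l, m l := Finset.sum_congr rfl (fun l _ => by have := h2 l; omega)
  omega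

lemma prod_reg (k : ℕ) (m : Fin k → ℕ) (h2 : ∀ i, 2 ≤ m i)
    [DecidableRel (prodPerm k m).Adj] [DecidableEq (∀ i : Fin k, Equiv.Perm (Fin (m i)))]
    (v : ∀ i : Fin k, Equiv.Perm (Fin (m i))) :
    ((prodPerm k m).neighborFinset v).card = ∑ i, m i - k := by
  classical
  set F : (Σ i : Fin k, Fin (m i - 1)) → (∀ j : Fin k, Equiv.Perm (Fin (m j))) :=
    fun T => Function.update v T.1 (v T.1 * sw (m T.1) T.2 (fin_pred_lt T.2)) with hF
  have hrange : (prodPerm k m).neighborSet v = Set.range F := by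
    ext z
    rw [SimpleGraph.mem_neighborSet, prod_adj_iff]
    constructor
    · rintro ⟨i, p, hp, rfl⟩
      exact ⟨⟨i, ⟨p, by omega⟩⟩, rfl⟩
    · rintro ⟨⟨i, t⟩, rfl⟩
      exact ⟨i, t, fin_pred_lt t, rfl⟩
  have hFinj : Function.Injective F := by
    rintro ⟨i, p⟩ ⟨i', p'⟩ h
    rcases eq_or_ne i i' with rfl | hne
    · have h0 : Function.update v i (v i * sw (m i) p (fin_pred_lt p)) i
          = Function.update v i (v i * sw (m i) p' (fin_pred_lt p')) i := congrFun h i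
      rw [Function.update_self, Function.update_self] at h0
      have : p = p' := Fin.ext (sw_injective (fin_pred_lt p) (fin_pred_lt p')
        (mul_left_cancel h0))
      subst this
      rfl
    · exfalso
      have h0 : Function.update v i (v i * sw (m i) p (fin_pred_lt p)) i
          = Function.update v i' (v i' * sw (m i') p' (fin_pred_lt p')) i := congrFun h i
      rw [Function.update_self, Function.update_of_ne hne] at h0
      exact mul_sw_ne (fin_pred_lt p) (v i) h0
  have h1 : ((prodPerm k m).neighborFinset v).card = ((prodPerm k m).neighborSet v).ncard := by
    rw [SimpleGraph.neighborFinset_def, Set.toFinset_card, ← Nat.card_coe_set_eq,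
      Nat.card_eq_fintype_card]
  rw [h1, hrange, ← Nat.card_coe_set_eq, Nat.card_range_of_injective hFinj,
    Nat.card_eq_fintype_card, Fintype.card_sigma]
  simp only [Fintype.card_fin]
  exact sum_pred h2


/-- for `n_1 ≥ … ≥ n_k ≥ 2` with `n_1 ≥ 3` and `n = n_1 + … + n_k`, the
product `Π = Π_{n_1} □ ⋯ □ Π_{n_k}` is `(n−k−3)`-heavy, and consequently every maximal
matching of `Π` has at least `(n−k)/(3n−3k+1)·|V(Π)|` edges. -/
theorem stmt17 (k : ℕ) (hk : 0 < k) (m : Fin k → ℕ) (hmono : Antitone m)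
    (h2 : ∀ i, 2 ≤ m i) (h3 : 3 ≤ m ⟨0, hk⟩) :
    IsHeavy (prodPerm k m) (∑ i, m i - k - 3) ∧
    ∀ M : Set (Sym2 (∀ i : Fin k, Equiv.Perm (Fin (m i)))),
      IsMaximalMatching (prodPerm k m) M →
      ((∑ i, m i : ℕ) - (k : ℝ)) / (3 * (∑ i, m i : ℕ) - 3 * (k : ℝ) + 1) *
          (Fintype.card (∀ i : Fin k, Equiv.Perm (Fin (m i))) : ℝ) ≤ (M.ncard : ℝ) := by
  classical
  refine ⟨part1 k m h2, ?_⟩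
  intro M hM
  haveI : DecidableRel (prodPerm k m).Adj := Classical.decRel _
  haveI : DecidablePred (Covered M) := Classical.decPred _
  have hkn : k ≤ ∑ i, m i := by
    calc k = ∑ _i : Fin k, 1 := by
          rw [Finset.sum_const, smul_eq_mul, mul_one, Finset.card_univ, Fintype.card_fin]
      _ ≤ ∑ i, m i := Finset.sum_le_sum (fun i _ => le_trans one_le_two (h2 i))
  set n : ℕ := ∑ i, m i with hn
  set d : ℕ := n - k with hd
  have hmain : d * Fintype.card (∀ i : Fin k, Equiv.Perm (Fin (m i)))
      ≤ (3 * d + 1) * M.ncard :=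
    count_main (fun v => prod_reg k m h2 v) (part1 k m h2) (by omega) hM
  have hdR : ((d : ℕ) : ℝ) = (n : ℝ) - (k : ℝ) := by
    rw [hd, Nat.cast_sub hkn]
  have hBR : 3 * ((n : ℕ) : ℝ) - 3 * (k : ℝ) + 1 = 3 * ((d : ℕ) : ℝ) + 1 := by
    rw [hdR]; ring
  rw [hBR, ← hdR]
  have hpos : (0 : ℝ) < 3 * ((d : ℕ) : ℝ) + 1 := by positivity
  rw [div_mul_eq_mul_div, div_le_iff₀ hpos]
  rw [mul_comm ((M.ncard : ℕ) : ℝ) _]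
  exact_mod_cast hmain
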